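/- For all positive integers m, n, the function h(x) = cos x satisfies the Sturm–Liouville equation −σ(x)·d/dx(σ(x)·dh/dx) + 2n²·h(x) = 2·ρ(x)·h(x) for all real x, i.e. cos x is a solution of the associated periodic Sturm–Liouville problem with parameter l = n and eigenvalue λ = 2. -/

import Mathlib

open Real

/-- `σ(x) = √(m² + 4mn + n² − (m² − n²)cos 2x)`. -/
noncomputable def sigmaMN (m n : ℕ) (x : ℝ) : ℝ :=
  Real.sqrt ((m : ℝ) ^ 2 + 4 * m * n + n ^ 2 - ((m : ℝ) ^ 2 - n ^ 2) * Real.cos (2 * x))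

/-- `ρ(x) = (m+n)(m+n − (m−n)cos 2x)`. -/
noncomputable def rhoMN (m n : ℕ) (x : ℝ) : ℝ :=
  ((m : ℝ) + n) * ((m : ℝ) + n - ((m : ℝ) - n) * Real.cos (2 * x))

/-- `h(x) = cos x` solves the associated periodic Sturm–Liouville problem
`−σ(x)·d/dx(σ(x)·dh/dx) + 2l²·h = λ·ρ(x)·h` with parameter `l = n` and eigenvalue `λ = 2`. -/
theorem cos_solves_sturm_liouville (m n : ℕ) (hm : 0 < m) (hn : 0 < n) (x : ℝ) :
    -(sigmaMN m n x * deriv (fun t : ℝ => sigmaMN m n t * deriv Real.cos t) x) +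
      2 * (n : ℝ) ^ 2 * Real.cos x = 2 * rhoMN m n x * Real.cos x := by
  set A : ℝ := (m : ℝ) ^ 2 + 4 * m * n + n ^ 2 with hA
  set B : ℝ := (m : ℝ) ^ 2 - (n : ℝ) ^ 2 with hB
  have hm1 : (1 : ℝ) ≤ (m : ℝ) := by exact_mod_cast hm
  have hn1 : (1 : ℝ) ≤ (n : ℝ) := by exact_mod_cast hn
  set g : ℝ → ℝ := fun t => A - B * Real.cos (2 * t) with hg
  have hgpos : ∀ t : ℝ, 0 < g t := by
    intro t
    have h1 : Real.cos (2 * t) ≤ 1 := Real.cos_le_one _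
    have h2 : -1 ≤ Real.cos (2 * t) := Real.neg_one_le_cos _
    have : B * Real.cos (2 * t) ≤ (m : ℝ) ^ 2 + n ^ 2 := by nlinarith
    have : 0 < 4 * (m : ℝ) * n := by positivity
    simp only [hg, hA]
    nlinarith
  have hgx : g x ≠ 0 := (hgpos x).ne'
  -- derivative of g
  have hg' : HasDerivAt g (B * (2 * Real.sin (2 * x))) x := by
    have h2t : HasDerivAt (fun t : ℝ => 2 * t) 2 x := by
      simpa using (hasDerivAt_id x).const_mul 2
    have hcos : HasDerivAt (fun t : ℝ => Real.cos (2 * t)) (-Real.sin (2 * x) * 2) x :=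
      (Real.hasDerivAt_cos (2 * x)).comp x h2t
    have := (hasDerivAt_const x A).sub (hcos.const_mul B)
    exact this.congr_deriv (by ring)
  have hsig : HasDerivAt (sigmaMN m n)
      (1 / (2 * Real.sqrt (g x)) * (B * (2 * Real.sin (2 * x)))) x := by
    have := (Real.hasDerivAt_sqrt hgx).comp x hg'
    exact this
  have hns : HasDerivAt (fun t : ℝ => -Real.sin t) (-Real.cos x) x :=
    (Real.hasDerivAt_sin x).neg
  have hprod : HasDerivAt (fun t : ℝ => sigmaMN m n t * (-Real.sin t))
      (1 / (2 * Real.sqrt (g x)) * (B * (2 * Real.sin (2 * x))) * (-Real.sin x)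
        + sigmaMN m n x * (-Real.cos x)) x := hsig.mul hns
  have hfun : (fun t : ℝ => sigmaMN m n t * deriv Real.cos t)
      = fun t : ℝ => sigmaMN m n t * (-Real.sin t) := by
    funext t; rw [Real.deriv_cos]
  rw [hfun, hprod.deriv]
  have hsq : Real.sqrt (g x) * Real.sqrt (g x) = g x := Real.mul_self_sqrt (hgpos x).le
  have hsn : Real.sqrt (g x) ≠ 0 := Real.sqrt_ne_zero'.mpr (hgpos x)
  have hsval : sigmaMN m n x = Real.sqrt (g x) := by simp [sigmaMN, hg, hA, hB]
  rw [hsval]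
  have hσσ' : Real.sqrt (g x) * (1 / (2 * Real.sqrt (g x)) * (B * (2 * Real.sin (2 * x)))) =
      B * Real.sin (2 * x) := by
    field_simp
  have key : -(Real.sqrt (g x) *
      (1 / (2 * Real.sqrt (g x)) * (B * (2 * Real.sin (2 * x))) * (-Real.sin x)
        + Real.sqrt (g x) * (-Real.cos x)))
      = B * Real.sin (2 * x) * Real.sin x + g x * Real.cos x := by
    have h1 : Real.sqrt (g x) * (1 / (2 * Real.sqrt (g x)) * (B * (2 * Real.sin (2 * x)))
        * (-Real.sin x)) = B * Real.sin (2 * x) * (-Real.sin x) := by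
      field_simp
    linear_combination (-1 : ℝ) * h1 + Real.cos x * hsq
  rw [key]
  simp only [hg, hA, hB, rhoMN]
  rw [Real.sin_two_mul, Real.cos_two_mul']
  linear_combination ((m : ℝ) ^ 2 - (n : ℝ) ^ 2) * Real.cos x * Real.sin_sq_add_cos_sq x
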